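/- Let N ≥ 1 and, for each j = 1,…,N, let A^j be an N×N real matrix with nonnegative entries such that Σ_{j=1}^{N} (A^j)_{hk} = 1 for all indices h,k (stochasticity with respect to j). Then for every initial datum f⁰ ∈ ℝ^N with f⁰_j ≥ 0 for all j, the ODE system f_j'(t) = f(t)ᵀ A^j f(t) − f_j(t)·Σ_{k=1}^{N} f_k(t), j = 1,…,N, admits a unique solution f : [0,∞) → ℝ^N with f(0) = f⁰; moreover the solution is componentwise nonnegative, f_j(t) ≥ 0 for all j and all t ≥ 0, and its total mass is conserved: Σ_{j=1}^{N} f_j(t) = Σ_{j=1}^{N} f⁰_j for all t ≥ 0. -/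

import Mathlib

open Set Metric

namespace Statement7Aux

noncomputable def clampS (S x : ℝ) : ℝ := max 0 (min x S)

lemma clampS_nonneg (S x : ℝ) : 0 ≤ clampS S x := le_max_left _ _

lemma clampS_le (S : ℝ) (hS : 0 ≤ S) (x : ℝ) : clampS S x ≤ S :=
  max_le hS (min_le_right _ _)

lemma clampS_eq (S x : ℝ) (h0 : 0 ≤ x) (hle : x ≤ S) : clampS S x = x := by
  unfold clampS; rw [min_eq_left hle, max_eq_right h0]

lemma clampS_of_neg (S x : ℝ) (h : x < 0) : clampS S x = 0 := by
  unfold clampS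
  exact max_eq_left (le_of_lt (lt_of_le_of_lt (min_le_left _ _) h))

lemma clampS_lip (S a b : ℝ) : |clampS S a - clampS S b| ≤ |a - b| := by
  unfold clampS
  calc |max 0 (min a S) - max 0 (min b S)|
      = |max (min a S) 0 - max (min b S) 0| := by rw [max_comm 0, max_comm 0]
    _ ≤ |min a S - min b S| := abs_max_sub_max_le_abs _ _ _
    _ ≤ max |a - b| |S - S| := abs_min_sub_min_le_max _ _ _ _
    _ = |a - b| := by simp

variable {N : ℕ}

noncomputable def Ff (N : ℕ) (A : Fin N → Matrix (Fin N) (Fin N) ℝ) (x : Fin N → ℝ) :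
    Fin N → ℝ :=
  fun j => (∑ h, ∑ k, x h * A j h k * x k) - x j * ∑ k, x k

noncomputable def Pf (N : ℕ) (S : ℝ) (x : Fin N → ℝ) : Fin N → ℝ := fun j => clampS S (x j)

noncomputable def Gf (N : ℕ) (A : Fin N → Matrix (Fin N) (Fin N) ℝ) (S : ℝ)
    (x : Fin N → ℝ) : Fin N → ℝ := Ff N A (Pf N S x)

lemma lipFf (A : Fin N → Matrix (Fin N) (Fin N) ℝ)
    (hpos : ∀ j h k, 0 ≤ A j h k) (hA1 : ∀ j h k, A j h k ≤ 1) (R : ℝ) (hR : 0 ≤ R) :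
    LipschitzOnWith ⟨2*N^2*R + 2*N*R, by positivity⟩ (Ff N A) (closedBall 0 R) := by
  refine lipschitzOnWith_iff_dist_le_mul.2 ?_
  intro x hx y hy
  set d := dist x y with hd
  have hd0 : 0 ≤ d := dist_nonneg
  have hxR : ∀ h, |x h| ≤ R := fun h => by
    have := norm_le_pi_norm x h
    rw [Real.norm_eq_abs] at this
    exact this.trans (mem_closedBall_zero_iff.1 hx)
  have hyR : ∀ h, |y h| ≤ R := fun h => by
    have := norm_le_pi_norm y h
    rw [Real.norm_eq_abs] at this
    exact this.trans (mem_closedBall_zero_iff.1 hy)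
  have hdc : ∀ h, |x h - y h| ≤ d := fun h => by
    have := dist_le_pi_dist x y h
    rwa [Real.dist_eq] at this
  refine (dist_pi_le_iff (mul_nonneg (NNReal.coe_nonneg _) hd0)).2 ?_
  intro j
  rw [Real.dist_eq]
  have hQ : |(∑ h, ∑ k, x h * A j h k * x k) - ∑ h, ∑ k, y h * A j h k * y k|
      ≤ (N:ℝ)^2 * (2*R*d) := by
    rw [← Finset.sum_sub_distrib]
    calc |∑ h, ((∑ k, x h * A j h k * x k) - ∑ k, y h * A j h k * y k)|
        ≤ ∑ h, |(∑ k, x h * A j h k * x k) - ∑ k, y h * A j h k * y k| :=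
          Finset.abs_sum_le_sum_abs _ _
      _ ≤ ∑ _h : Fin N, (N:ℝ) * (2*R*d) := by
          apply Finset.sum_le_sum
          intro h _
          rw [← Finset.sum_sub_distrib]
          calc |∑ k, (x h * A j h k * x k - y h * A j h k * y k)|
              ≤ ∑ k, |x h * A j h k * x k - y h * A j h k * y k| :=
                Finset.abs_sum_le_sum_abs _ _
            _ ≤ ∑ _k : Fin N, 2*R*d := by
                apply Finset.sum_le_sum
                intro k _
                have hrw : x h * A j h k * x k - y h * A j h k * y k
                    = A j h k * (x h * (x k - y k)) + A j h k * ((x h - y h) * y k) := by ring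
                rw [hrw]
                calc |A j h k * (x h * (x k - y k)) + A j h k * ((x h - y h) * y k)|
                    ≤ |A j h k * (x h * (x k - y k))| + |A j h k * ((x h - y h) * y k)| :=
                      abs_add_le _ _
                  _ ≤ R * d + d * R := by
                      rw [abs_mul, abs_mul, abs_mul, abs_mul,
                        abs_of_nonneg (hpos j h k)]
                      have h1 : A j h k * (|x h| * |x k - y k|) ≤ 1 * (R * d) := by
                        apply mul_le_mul (hA1 j h k) _ (by positivity) zero_le_one
                        exact mul_le_mul (hxR h) (hdc k) (abs_nonneg _) hR
                      have h2 : A j h k * (|x h - y h| * |y k|) ≤ 1 * (d * R) := by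
                        apply mul_le_mul (hA1 j h k) _ (by positivity) zero_le_one
                        exact mul_le_mul (hdc h) (hyR k) (abs_nonneg _) hd0
                      rw [one_mul] at h1 h2
                      linarith
                  _ = 2*R*d := by ring
            _ = (N:ℝ) * (2*R*d) := by simp [Finset.sum_const, Finset.card_univ]
      _ = (N:ℝ)^2 * (2*R*d) := by simp [Finset.sum_const, Finset.card_univ]; ring
  have hm : |(∑ k, x k) - ∑ k, y k| ≤ (N:ℝ) * d := by
    rw [← Finset.sum_sub_distrib]
    calc |∑ k, (x k - y k)| ≤ ∑ k, |x k - y k| := Finset.abs_sum_le_sum_abs _ _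
      _ ≤ ∑ _k : Fin N, d := Finset.sum_le_sum (fun k _ => hdc k)
      _ = (N:ℝ) * d := by simp [Finset.sum_const, Finset.card_univ, mul_comm]
  have hmy : |∑ k, y k| ≤ (N:ℝ) * R := by
    calc |∑ k, y k| ≤ ∑ k, |y k| := Finset.abs_sum_le_sum_abs _ _
      _ ≤ ∑ _k : Fin N, R := Finset.sum_le_sum (fun k _ => hyR k)
      _ = (N:ℝ) * R := by simp [Finset.sum_const, Finset.card_univ, mul_comm]
  have hlin : |x j * ∑ k, x k - y j * ∑ k, y k| ≤ 2*(N:ℝ)*R*d := by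
    have hrw : x j * ∑ k, x k - y j * ∑ k, y k
        = x j * ((∑ k, x k) - ∑ k, y k) + (x j - y j) * ∑ k, y k := by ring
    rw [hrw]
    calc |x j * ((∑ k, x k) - ∑ k, y k) + (x j - y j) * ∑ k, y k|
        ≤ |x j| * |(∑ k, x k) - ∑ k, y k| + |x j - y j| * |∑ k, y k| := by
          refine (abs_add_le _ _).trans ?_
          rw [abs_mul, abs_mul]
      _ ≤ R * ((N:ℝ)*d) + d * ((N:ℝ)*R) :=
          add_le_add (mul_le_mul (hxR j) hm (abs_nonneg _) hR)
            (mul_le_mul (hdc j) hmy (abs_nonneg _) hd0)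
      _ = 2*(N:ℝ)*R*d := by ring
  show |Ff N A x j - Ff N A y j| ≤ _
  unfold Ff
  have : |((∑ h, ∑ k, x h * A j h k * x k) - x j * ∑ k, x k)
      - ((∑ h, ∑ k, y h * A j h k * y k) - y j * ∑ k, y k)|
      ≤ (N:ℝ)^2 * (2*R*d) + 2*(N:ℝ)*R*d := by
    have hrw : ((∑ h, ∑ k, x h * A j h k * x k) - x j * ∑ k, x k)
      - ((∑ h, ∑ k, y h * A j h k * y k) - y j * ∑ k, y k)
      = ((∑ h, ∑ k, x h * A j h k * x k) - ∑ h, ∑ k, y h * A j h k * y k)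
        - (x j * ∑ k, x k - y j * ∑ k, y k) := by ring
    rw [hrw]
    exact (abs_sub _ _).trans (by linarith)
  refine this.trans ?_
  show (N:ℝ)^2 * (2*R*d) + 2*(N:ℝ)*R*d ≤ (⟨2*N^2*R + 2*N*R, by positivity⟩ : NNReal) * d
  have : ((⟨2*N^2*R + 2*N*R, by positivity⟩ : NNReal) : ℝ) = 2*(N:ℝ)^2*R + 2*(N:ℝ)*R := by
    norm_num
  rw [this]
  ring_nf
  rfl

lemma Pf_mem (S : ℝ) (hS : 0 ≤ S) (x : Fin N → ℝ) : Pf N S x ∈ closedBall (0 : Fin N → ℝ) S := by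
  rw [mem_closedBall_zero_iff]
  rw [pi_norm_le_iff_of_nonneg hS]
  intro j
  show ‖clampS S (x j)‖ ≤ S
  rw [Real.norm_eq_abs, abs_of_nonneg (clampS_nonneg _ _)]
  exact clampS_le S hS _

lemma Pf_lip (S : ℝ) (x y : Fin N → ℝ) : dist (Pf N S x) (Pf N S y) ≤ dist x y := by
  rw [dist_pi_le_iff dist_nonneg]
  intro j
  rw [Real.dist_eq]
  exact (clampS_lip S (x j) (y j)).trans (by rw [← Real.dist_eq]; exact dist_le_pi_dist x y j)

lemma lipGf (A : Fin N → Matrix (Fin N) (Fin N) ℝ)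
    (hpos : ∀ j h k, 0 ≤ A j h k) (hA1 : ∀ j h k, A j h k ≤ 1) (S : ℝ) (hS : 0 ≤ S) :
    LipschitzWith ⟨2*N^2*S + 2*N*S, by positivity⟩ (Gf N A S) := by
  apply LipschitzWith.of_dist_le_mul
  intro x y
  calc dist (Gf N A S x) (Gf N A S y) = dist (Ff N A (Pf N S x)) (Ff N A (Pf N S y)) := rfl
    _ ≤ (⟨2*N^2*S + 2*N*S, by positivity⟩ : NNReal) * dist (Pf N S x) (Pf N S y) :=
        (lipschitzOnWith_iff_dist_le_mul.1 (lipFf A hpos hA1 S hS)) _ (Pf_mem S hS x) _ (Pf_mem S hS y)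
    _ ≤ (⟨2*N^2*S + 2*N*S, by positivity⟩ : NNReal) * dist x y := by
        apply mul_le_mul_of_nonneg_left (Pf_lip S x y) (by positivity)

lemma boundGf (A : Fin N → Matrix (Fin N) (Fin N) ℝ)
    (hpos : ∀ j h k, 0 ≤ A j h k) (hA1 : ∀ j h k, A j h k ≤ 1) (S : ℝ) (hS : 0 ≤ S)
    (x : Fin N → ℝ) : ‖Gf N A S x‖ ≤ ((N:ℝ)^2 + N) * S^2 := by
  rw [pi_norm_le_iff_of_nonneg (by positivity)]
  intro j
  rw [Real.norm_eq_abs]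
  set p := Pf N S x with hp
  have hp0 : ∀ k, 0 ≤ p k := fun k => clampS_nonneg _ _
  have hpS : ∀ k, p k ≤ S := fun k => clampS_le S hS _
  have hQ : |∑ h, ∑ k, p h * A j h k * p k| ≤ (N:ℝ)^2 * S^2 := by
    rw [abs_of_nonneg (Finset.sum_nonneg fun h _ => Finset.sum_nonneg fun k _ =>
      mul_nonneg (mul_nonneg (hp0 h) (hpos j h k)) (hp0 k))]
    calc ∑ h, ∑ k, p h * A j h k * p k ≤ ∑ _h : Fin N, ∑ _k : Fin N, S * 1 * S := by
          apply Finset.sum_le_sum; intro h _; apply Finset.sum_le_sum; intro k _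
          apply mul_le_mul _ (hpS k) (hp0 k) (by positivity)
          exact mul_le_mul (hpS h) (hA1 j h k) (hpos j h k) hS
      _ = (N:ℝ)^2 * S^2 := by simp [Finset.sum_const, Finset.card_univ]; ring
  have hL : |p j * ∑ k, p k| ≤ S * ((N:ℝ) * S) := by
    rw [abs_of_nonneg (mul_nonneg (hp0 j) (Finset.sum_nonneg fun k _ => hp0 k))]
    apply mul_le_mul (hpS j) _ (Finset.sum_nonneg fun k _ => hp0 k) hS
    calc ∑ k, p k ≤ ∑ _k : Fin N, S := Finset.sum_le_sum fun k _ => hpS k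
      _ = (N:ℝ) * S := by simp [Finset.sum_const, Finset.card_univ, mul_comm]
  calc |Gf N A S x j| = |(∑ h, ∑ k, p h * A j h k * p k) - p j * ∑ k, p k| := rfl
    _ ≤ |∑ h, ∑ k, p h * A j h k * p k| + |p j * ∑ k, p k| := abs_sub _ _
    _ ≤ (N:ℝ)^2 * S^2 + S * ((N:ℝ) * S) := add_le_add hQ hL
    _ = ((N:ℝ)^2 + N) * S^2 := by ring

lemma sumFf (A : Fin N → Matrix (Fin N) (Fin N) ℝ)
    (hstoch : ∀ h k, ∑ j, A j h k = 1) (x : Fin N → ℝ) :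
    ∑ j, Ff N A x j = 0 := by
  unfold Ff
  rw [Finset.sum_sub_distrib, ← Finset.sum_mul]
  have h1 : ∑ j, ∑ h, ∑ k, x h * A j h k * x k = ∑ h, ∑ k, ∑ j, x h * A j h k * x k := by
    rw [Finset.sum_comm]
    exact Finset.sum_congr rfl fun h _ => Finset.sum_comm
  rw [h1]
  have h2 : ∀ h k : Fin N, ∑ j, x h * A j h k * x k = x h * x k := by
    intro h k
    calc ∑ j, x h * A j h k * x k = ∑ j, (x h * x k) * A j h k :=
          Finset.sum_congr rfl fun j _ => by ring
      _ = (x h * x k) * ∑ j, A j h k := by rw [← Finset.mul_sum]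
      _ = x h * x k := by rw [hstoch h k, mul_one]
  have h3 : ∑ h, ∑ k, ∑ j, x h * A j h k * x k = (∑ h, x h) * ∑ k, x k := by
    rw [Finset.sum_mul_sum]
    exact Finset.sum_congr rfl fun h _ => Finset.sum_congr rfl fun k _ => h2 h k
  rw [h3, sub_self]

lemma sumGf (A : Fin N → Matrix (Fin N) (Fin N) ℝ)
    (hstoch : ∀ h k, ∑ j, A j h k = 1) (S : ℝ) (x : Fin N → ℝ) :
    ∑ j, Gf N A S x j = 0 :=
  sumFf A hstoch _

lemma existsSol {E : Type*} [NormedAddCommGroup E] [NormedSpace ℝ E] [CompleteSpace E]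
    (G : E → E) (L : NNReal) (hL : LipschitzWith L G) (C : ℝ) (hC : 0 ≤ C)
    (hbd : ∀ x, ‖G x‖ ≤ C) (x0 : E) (T : ℝ) (hT : 0 ≤ T) :
    ∃ u : ℝ → E, u 0 = x0 ∧ ∀ t ∈ Icc (0:ℝ) T, HasDerivWithinAt u (G (u t)) (Icc (0:ℝ) T) t := by
  have hpl : IsPicardLindelof (fun _ => G) (tmin := 0) (tmax := T) ⟨0, le_refl 0, hT⟩ x0
      ⟨C*T, mul_nonneg hC hT⟩ 0 ⟨C, hC⟩ L :=
    IsPicardLindelof.of_time_independent (fun x _ => hbd x) hL.lipschitzOnWith (by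
      show C * max (T - 0) (0 - 0) ≤ C * T - 0
      simp only [sub_zero, max_eq_left hT, le_refl])
  exact hpl.exists_eq_forall_mem_Icc_hasDerivWithinAt₀

lemma uniqSol {E : Type*} [NormedAddCommGroup E] [NormedSpace ℝ E]
    (G : E → E) (L : NNReal) (hL : LipschitzWith L G) {u w : ℝ → E} {a b : ℝ}
    (hu : ∀ t ∈ Icc (0:ℝ) a, HasDerivWithinAt u (G (u t)) (Icc (0:ℝ) a) t)
    (hw : ∀ t ∈ Icc (0:ℝ) b, HasDerivWithinAt w (G (w t)) (Icc (0:ℝ) b) t)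
    (h0 : u 0 = w 0) : ∀ s ∈ Icc (0:ℝ) (min a b), u s = w s := by
  have key : ∀ {v : ℝ → E} {c : ℝ}, min a b ≤ c →
      (∀ t ∈ Icc (0:ℝ) c, HasDerivWithinAt v (G (v t)) (Icc (0:ℝ) c) t) →
      ∀ t ∈ Ico (0:ℝ) (min a b), HasDerivWithinAt v (G (v t)) (Ici t) t := by
    intro v c hc hv t ht
    apply (hv t ⟨ht.1, le_trans (le_of_lt ht.2) hc⟩).mono_of_mem_nhdsWithin
    apply Filter.mem_of_superset (Filter.inter_mem self_mem_nhdsWithin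
      (mem_nhdsWithin_of_mem_nhds (Iio_mem_nhds (lt_of_lt_of_le ht.2 hc))))
    exact fun s hs => ⟨le_trans ht.1 hs.1, le_of_lt hs.2⟩
  have hucont : ContinuousOn u (Icc 0 (min a b)) := fun s hs =>
    ((hu s ⟨hs.1, le_trans hs.2 (min_le_left a b)⟩).continuousWithinAt).mono
      (Icc_subset_Icc_right (min_le_left a b))
  have hwcont : ContinuousOn w (Icc 0 (min a b)) := fun s hs =>
    ((hw s ⟨hs.1, le_trans hs.2 (min_le_right a b)⟩).continuousWithinAt).mono
      (Icc_subset_Icc_right (min_le_right a b))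
  exact ODE_solution_unique_of_mem_Icc_right
    (fun _ _ => hL.lipschitzOnWith)
    hucont (key (min_le_left a b) hu) (fun t _ => mem_univ (u t))
    hwcont (key (min_le_right a b) hw) (fun t _ => mem_univ (w t)) h0

end Statement7Aux

open Statement7Aux



/-- (Delitala–Tosin type well-posedness.)  Let `N ≥ 1` and, for each `j`, let
`A^j` be an `N×N` real matrix with nonnegative entries such that
`Σ_j (A^j)_{hk} = 1` for all `h,k`.  Then for every initial datum `f⁰ ≥ 0`
(componentwise) the ODE system
`f_j' = fᵀ A^j f − f_j · Σ_k f_k`, `j = 1,…,N`,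
admits a unique solution on `[0,∞)` with `f(0) = f⁰`; moreover the solution is
componentwise nonnegative and its total mass `Σ_j f_j(t)` is conserved. -/
theorem statement7 (N : ℕ) (hN : 1 ≤ N)
    (A : Fin N → Matrix (Fin N) (Fin N) ℝ)
    (hpos : ∀ j h k, 0 ≤ A j h k)
    (hstoch : ∀ h k, ∑ j, A j h k = 1)
    (f0 : Fin N → ℝ) (hf0 : ∀ j, 0 ≤ f0 j) :
    ∃ f : ℝ → Fin N → ℝ,
      (f 0 = f0
        ∧ (∀ t ∈ Set.Ici (0 : ℝ), ∀ j, HasDerivWithinAt (fun s => f s j)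
            ((∑ h, ∑ k, f t h * A j h k * f t k) - f t j * ∑ k, f t k)
            (Set.Ici (0 : ℝ)) t)
        ∧ (∀ t ∈ Set.Ici (0 : ℝ), ∀ j, 0 ≤ f t j)
        ∧ (∀ t ∈ Set.Ici (0 : ℝ), ∑ j, f t j = ∑ j, f0 j))
      ∧ (∀ g : ℝ → Fin N → ℝ, g 0 = f0 →
          (∀ t ∈ Set.Ici (0 : ℝ), ∀ j, HasDerivWithinAt (fun s => g s j)
            ((∑ h, ∑ k, g t h * A j h k * g t k) - g t j * ∑ k, g t k)
            (Set.Ici (0 : ℝ)) t) →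
          ∀ t ∈ Set.Ici (0 : ℝ), g t = f t) := by
  classical
  set S : ℝ := ∑ j, f0 j with hSdef
  have hS : 0 ≤ S := Finset.sum_nonneg fun j _ => hf0 j
  have hA1 : ∀ j h k, A j h k ≤ 1 := by
    intro j h k
    calc A j h k ≤ ∑ j', A j' h k :=
          Finset.single_le_sum (fun j' _ => hpos j' h k) (Finset.mem_univ j)
      _ = 1 := hstoch h k
  set L : NNReal := ⟨2*N^2*S + 2*N*S, by positivity⟩ with hLdef
  have hlipG : LipschitzWith L (Gf N A S) := lipGf A hpos hA1 S hS
  have hbd : ∀ x, ‖Gf N A S x‖ ≤ ((N:ℝ)^2 + N) * S^2 := boundGf A hpos hA1 S hS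
  have hEx : ∀ n : ℕ, ∃ u : ℝ → (Fin N → ℝ), u 0 = f0 ∧
      ∀ t ∈ Set.Icc (0:ℝ) (n:ℝ), HasDerivWithinAt u (Gf N A S (u t)) (Set.Icc (0:ℝ) (n:ℝ)) t :=
    fun n => existsSol (Gf N A S) L hlipG _ (by positivity) hbd f0 (n:ℝ) (Nat.cast_nonneg n)
  choose sol hsol0 hsolD using hEx
  set f : ℝ → Fin N → ℝ := fun s => sol (⌈s⌉₊ + 1) s with hfdef
  have hagree : ∀ (n : ℕ) (s : ℝ), s ∈ Set.Icc (0:ℝ) (n:ℝ) → f s = sol n s := by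
    intro n s hs
    have hs1 : s ≤ ((⌈s⌉₊ + 1 : ℕ) : ℝ) := by
      push_cast
      exact le_trans (Nat.le_ceil s) (by linarith)
    exact uniqSol (Gf N A S) L hlipG (hsolD (⌈s⌉₊ + 1)) (hsolD n)
      (by rw [hsol0, hsol0]) s ⟨hs.1, le_min hs1 hs.2⟩
  have hf0eq : f 0 = f0 := hsol0 _
  have hfD : ∀ t ∈ Set.Ici (0:ℝ), HasDerivWithinAt f (Gf N A S (f t)) (Set.Ici (0:ℝ)) t := by
    intro t ht
    set n := ⌈t⌉₊ + 1 with hn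
    have htn : t < (n:ℝ) := by
      rw [hn]
      push_cast
      exact lt_of_le_of_lt (Nat.le_ceil t) (by linarith)
    have hmem : Set.Icc (0:ℝ) (n:ℝ) ∈ nhdsWithin t (Set.Ici (0:ℝ)) := by
      apply Filter.mem_of_superset (Filter.inter_mem self_mem_nhdsWithin
        (mem_nhdsWithin_of_mem_nhds (Iio_mem_nhds htn)))
      exact fun s hs => ⟨hs.1, le_of_lt hs.2⟩
    have h1 := (hsolD n t ⟨ht, le_of_lt htn⟩).mono_of_mem_nhdsWithin hmem
    have hev : f =ᶠ[nhdsWithin t (Set.Ici (0:ℝ))] sol n :=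
      Filter.eventuallyEq_of_mem hmem (fun s hs => hagree n s hs)
    have h2 := h1.congr_of_eventuallyEq hev (hagree n t ⟨ht, le_of_lt htn⟩)
    rwa [← hagree n t ⟨ht, le_of_lt htn⟩] at h2
  have hfDj : ∀ t ∈ Set.Ici (0:ℝ), ∀ j, HasDerivWithinAt (fun s => f s j)
      (Gf N A S (f t) j) (Set.Ici (0:ℝ)) t :=
    fun t ht j => (hasDerivWithinAt_pi.1 (hfD t ht)) j
  have hfcj : ∀ j, ContinuousOn (fun s => f s j) (Set.Ici (0:ℝ)) :=
    fun j s hs => (hfDj s hs j).continuousWithinAt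
  have hnn : ∀ t ∈ Set.Ici (0:ℝ), ∀ j, 0 ≤ f t j := by
    intro t ht j
    by_contra hneg
    push_neg at hneg
    set S0 : Set ℝ := Set.Icc 0 t ∩ (fun s => f s j) ⁻¹' Set.Ici 0 with hS0def
    have hS0closed : IsClosed S0 :=
      ((hfcj j).mono Set.Icc_subset_Ici_self).preimage_isClosed_of_isClosed
        isClosed_Icc isClosed_Ici
    have h0mem : (0:ℝ) ∈ S0 := ⟨⟨le_refl 0, ht⟩, by
      simp only [Set.mem_preimage, Set.mem_Ici, hf0eq]
      exact hf0 j⟩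
    have hbdd : BddAbove S0 := ⟨t, fun s hs => hs.1.2⟩
    set T0 := sSup S0 with hT0def
    have hT0mem : T0 ∈ S0 := hS0closed.csSup_mem ⟨0, h0mem⟩ hbdd
    have hT0nn : 0 ≤ T0 := hT0mem.1.1
    have hT0f : 0 ≤ f T0 j := hT0mem.2
    have hT0lt : T0 < t := by
      rcases lt_or_eq_of_le hT0mem.1.2 with h | h
      · exact h
      · exact absurd (h ▸ hT0f) (not_le.2 hneg)
    have hmono : MonotoneOn (fun s => f s j) (Set.Icc T0 t) := by
      apply monotoneOn_of_deriv_nonneg (convex_Icc T0 t)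
        ((hfcj j).mono (fun s hs => le_trans hT0nn hs.1))
      · intro s hs
        rw [interior_Icc] at hs
        have hs0 : 0 < s := lt_of_le_of_lt hT0nn hs.1
        exact ((hfDj s (le_of_lt hs0) j).hasDerivAt
          (Ici_mem_nhds hs0)).differentiableAt.differentiableWithinAt
      · intro s hs
        rw [interior_Icc] at hs
        have hs0 : 0 < s := lt_of_le_of_lt hT0nn hs.1
        have hder := (hfDj s (le_of_lt hs0) j).hasDerivAt (Ici_mem_nhds hs0)
        rw [hder.deriv]
        have hlt : f s j < 0 := by
          by_contra hge
          push_neg at hge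
          have hmem : s ∈ S0 := ⟨⟨le_of_lt hs0, le_of_lt hs.2⟩, hge⟩
          exact absurd (le_csSup hbdd hmem) (not_le.2 hs.1)
        show 0 ≤ Gf N A S (f s) j
        have hpj : Pf N S (f s) j = 0 := clampS_of_neg S _ hlt
        show 0 ≤ (∑ h, ∑ k, Pf N S (f s) h * A j h k * Pf N S (f s) k)
            - Pf N S (f s) j * ∑ k, Pf N S (f s) k
        rw [hpj, zero_mul, sub_zero]
        exact Finset.sum_nonneg fun h _ => Finset.sum_nonneg fun k _ =>
          mul_nonneg (mul_nonneg (clampS_nonneg _ _) (hpos j h k)) (clampS_nonneg _ _)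
    have hle := hmono ⟨le_refl T0, le_of_lt hT0lt⟩ ⟨le_of_lt hT0lt, le_refl t⟩ (le_of_lt hT0lt)
    exact absurd (le_trans hT0f hle) (not_le.2 hneg)
  have hMD : ∀ s ∈ Set.Ici (0:ℝ), HasDerivWithinAt (fun u => ∑ j, f u j) 0 (Set.Ici (0:ℝ)) s := by
    intro s hs
    have hsum := HasDerivWithinAt.fun_sum (fun j (_ : j ∈ Finset.univ) => hfDj s hs j)
    rwa [sumGf A hstoch S (f s)] at hsum
  have hmass : ∀ s ∈ Set.Ici (0:ℝ), ∑ j, f s j = S := by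
    intro s hs
    have hb : ∀ u ∈ Set.Ici (0:ℝ), ‖(fun _ : ℝ => (0:ℝ)) u‖ ≤ 0 := fun _ _ => by simp
    have hbnd := Convex.norm_image_sub_le_of_norm_hasDerivWithin_le (f' := fun _ => (0:ℝ))
      hMD hb (convex_Ici 0) Set.self_mem_Ici hs
    rw [zero_mul] at hbnd
    have h5 : ∑ j, f s j = ∑ j, f 0 j := sub_eq_zero.1 (norm_le_zero_iff.1 hbnd)
    rw [h5, hf0eq]
  have hub : ∀ s ∈ Set.Ici (0:ℝ), ∀ j, f s j ≤ S := fun s hs j => by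
    rw [← hmass s hs]
    exact Finset.single_le_sum (fun k _ => hnn s hs k) (Finset.mem_univ j)
  have hGF : ∀ s ∈ Set.Ici (0:ℝ), Gf N A S (f s) = Ff N A (f s) := by
    intro s hs
    unfold Gf
    have hPf : Pf N S (f s) = f s := funext fun j => clampS_eq S _ (hnn s hs j) (hub s hs j)
    rw [hPf]
  have hfF : ∀ s ∈ Set.Ici (0:ℝ), HasDerivWithinAt f (Ff N A (f s)) (Set.Ici (0:ℝ)) s :=
    fun s hs => (hGF s hs) ▸ hfD s hs
  refine ⟨f, ⟨hf0eq, ?_, hnn, fun t ht => hmass t ht⟩, ?_⟩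
  · intro t ht j
    exact (hasDerivWithinAt_pi.1 (hfF t ht)) j
  · intro g hg0 hg' t ht
    have hgD : ∀ s ∈ Set.Ici (0:ℝ), HasDerivWithinAt g (Ff N A (g s)) (Set.Ici (0:ℝ)) s :=
      fun s hs => hasDerivWithinAt_pi.2 (fun j => hg' s hs j)
    have hgc : ContinuousOn g (Set.Icc (0:ℝ) (t+1)) := fun s hs =>
      ((hgD s hs.1).continuousWithinAt).mono Set.Icc_subset_Ici_self
    obtain ⟨R0, hR0⟩ := isCompact_Icc.exists_bound_of_continuousOn hgc
    set R := max R0 S with hRdef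
    have hRnn : 0 ≤ R := le_trans hS (le_max_right _ _)
    have hfball : ∀ s ∈ Set.Ico (0:ℝ) (t+1), f s ∈ Metric.closedBall (0 : Fin N → ℝ) R := by
      intro s hs
      rw [mem_closedBall_zero_iff, pi_norm_le_iff_of_nonneg hRnn]
      intro j
      rw [Real.norm_eq_abs, abs_le]
      constructor
      · linarith [hnn s hs.1 j]
      · exact le_trans (hub s hs.1 j) (le_max_right _ _)
    have hgball : ∀ s ∈ Set.Ico (0:ℝ) (t+1), g s ∈ Metric.closedBall (0 : Fin N → ℝ) R :=
      fun s hs => mem_closedBall_zero_iff.2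
        (le_trans (hR0 s ⟨hs.1, le_of_lt hs.2⟩) (le_max_left _ _))
    have key := ODE_solution_unique_of_mem_Icc_right
      (v := fun _ => Ff N A) (s := fun _ => Metric.closedBall (0 : Fin N → ℝ) R)
      (fun _ _ => lipFf A hpos hA1 R hRnn)
      (fun s hs => ((hfF s hs.1).continuousWithinAt).mono Set.Icc_subset_Ici_self)
      (fun s hs => (hfF s hs.1).mono (Set.Ici_subset_Ici.2 hs.1))
      hfball
      hgc
      (fun s hs => (hgD s hs.1).mono (Set.Ici_subset_Ici.2 hs.1))
      hgball
      (by rw [hf0eq, hg0])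
    exact (key ⟨ht, by linarith⟩).symm
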